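/- Let p be a prime, α a positive integer, and k = p^α. Let A be a nonempty finite set of integers, with decomposition A = ⋃_{i=1}^{j} A_i into its residue classes A_i = k·X_i + u_i modulo k, indexed so that u₁ = 0 and |A₁| ≥ |A₂| ≥ … ≥ |A_j|. Assume some u_i is not divisible by p, and let m = min{1 ≤ i ≤ j : p ∤ u_i}. Let X̂_m denote the image of X_m in ℤ/kℤ. If |X̂_m| + m − 1 > k, then |A_m + k·A| ≥ (k+1)|A_m| + m(|A₁| − |A_m|) − k. -/

import Mathlib

open Finset Pointwise

/-- The residue class of `A` modulo `k` at residue `u`. -/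
def resClass (k : ℕ) (A : Finset ℤ) (u : ℤ) : Finset ℤ :=
  A.filter (fun a => a % (k : ℤ) = u)

/-- The dilate `k·S = {k·s : s ∈ S}`. -/
def kdil (k : ℕ) (S : Finset ℤ) : Finset ℤ :=
  S.image (fun s => (k : ℤ) * s)

/-- `X_u = {(a − u)/k : a ∈ A, a ≡ u (mod k)}`. -/
def Xset (k : ℕ) (A : Finset ℤ) (u : ℤ) : Finset ℤ :=
  (resClass k A u).image (fun a => (a - u) / (k : ℤ))

/-- `X̂_u`: the image of `X_u` in `ℤ/kℤ`. -/
def Xhat (k : ℕ) (A : Finset ℤ) (u : ℤ) : Finset (ZMod k) :=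
  (Xset k A u).image (Int.cast : ℤ → ZMod k)

/-- Fiber of the residue class at `um` over `r : ZMod k` under `a ↦ a/k mod k`. -/
def cFib (k : ℕ) (A : Finset ℤ) (um : ℤ) (r : ZMod k) : Finset ℤ :=
  (resClass k A um).filter (fun a => ((a / (k : ℤ) : ℤ) : ZMod k) = r)

/-- Fiber of the sumset over `r : ZMod k` under `s ↦ s/k mod k`. -/
def fib (k : ℕ) (A : Finset ℤ) (um : ℤ) (r : ZMod k) : Finset ℤ :=
  (resClass k A um + kdil k A).filter (fun s => ((s / (k : ℤ) : ℤ) : ZMod k) = r)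

lemma ediv_shift {k : ℕ} (hk : 0 < k) {a c : ℤ} (h : a % (k : ℤ) = c) :
    (a - c) / (k : ℤ) = a / (k : ℤ) := by
  have hK : (k : ℤ) ≠ 0 := by exact_mod_cast hk.ne'
  have h2 : a - c = (k : ℤ) * (a / (k : ℤ)) := by
    have := Int.mul_ediv_add_emod a (k : ℤ)
    omega
  rw [h2, Int.mul_ediv_cancel_left _ hK]

lemma mem_Xhat_of_mem {k : ℕ} (hk : 0 < k) {A : Finset ℤ} {um : ℤ} {a : ℤ}
    (ha : a ∈ resClass k A um) : ((a / (k : ℤ) : ℤ) : ZMod k) ∈ Xhat k A um := by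
  have hmod : a % (k : ℤ) = um := (Finset.mem_filter.1 ha).2
  have : (a - um) / (k : ℤ) ∈ Xset k A um := Finset.mem_image_of_mem _ ha
  rw [ediv_shift hk hmod] at this
  exact Finset.mem_image_of_mem _ this

lemma cFib_nonempty {k : ℕ} (hk : 0 < k) {A : Finset ℤ} {um : ℤ} {r : ZMod k}
    (hr : r ∈ Xhat k A um) : (cFib k A um r).Nonempty := by
  obtain ⟨x, hx, hxr⟩ := Finset.mem_image.1 hr
  obtain ⟨a, ha, rfl⟩ := Finset.mem_image.1 hx
  have hmod : a % (k : ℤ) = um := (Finset.mem_filter.1 ha).2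
  refine ⟨a, Finset.mem_filter.2 ⟨ha, ?_⟩⟩
  rw [← ediv_shift hk hmod, hxr]

lemma fiber_bound {k : ℕ} (hk : 0 < k) (A : Finset ℤ) (um : ℤ) (ui : ℕ)
    (hAi : (resClass k A (ui : ℤ)).Nonempty) (r : ZMod k)
    (hr : r - (ui : ZMod k) ∈ Xhat k A um) :
    (cFib k A um (r - (ui : ZMod k))).card + (resClass k A (ui : ℤ)).card
      ≤ (fib k A um r).card + 1 := by
  have hK : (k : ℤ) ≠ 0 := by exact_mod_cast hk.ne'
  set C := cFib k A um (r - (ui : ZMod k)) with hC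
  set D := kdil k (resClass k A (ui : ℤ)) with hD
  have hsub : C + D ⊆ fib k A um r := by
    intro s hs
    obtain ⟨a, ha, y, hy, rfl⟩ := Finset.mem_add.1 hs
    obtain ⟨b, hb, rfl⟩ := Finset.mem_image.1 hy
    have haM : a ∈ resClass k A um := (Finset.mem_filter.1 ha).1
    have haV : ((a / (k : ℤ) : ℤ) : ZMod k) = r - (ui : ZMod k) := (Finset.mem_filter.1 ha).2
    have hbA : b ∈ A := (Finset.mem_filter.1 hb).1
    have hbmod : b % (k : ℤ) = (ui : ℤ) := (Finset.mem_filter.1 hb).2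
    refine Finset.mem_filter.2 ⟨Finset.add_mem_add haM (Finset.mem_image_of_mem _ hbA), ?_⟩
    have hdiv : (a + (k : ℤ) * b) / (k : ℤ) = a / (k : ℤ) + b :=
      Int.add_mul_ediv_left a b hK
    have hbz : ((b : ℤ) : ZMod k) = (ui : ZMod k) := by
      have hb2 : b = (k : ℤ) * (b / (k : ℤ)) + (ui : ℤ) := by
        have := Int.mul_ediv_add_emod b (k : ℤ); omega
      rw [hb2]
      push_cast
      simp
    rw [hdiv]
    push_cast
    rw [haV, hbz]
    ring
  have hCne : C.Nonempty := cFib_nonempty hk hr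
  have hDne : D.Nonempty := hAi.image _
  have hDcard : D.card = (resClass k A (ui : ℤ)).card :=
    Finset.card_image_of_injective _ (mul_right_injective₀ hK)
  have hcd : C.card + D.card - 1 ≤ (C + D).card :=
    cauchy_davenport_add_of_linearOrder_isCancelAdd hCne hDne
  have hle : (C + D).card ≤ (fib k A um r).card := Finset.card_le_card hsub
  have := hCne.card_pos
  omega

theorem stmt_9 (p : ℕ) (hp : p.Prime) (α : ℕ) (hα : 0 < α) (k : ℕ) (hk : k = p ^ α)
    (A : Finset ℤ) (hA : A.Nonempty)
    (j : ℕ) (hj : 0 < j) (u : ℕ → ℕ)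
    (hu_lt : ∀ i ∈ Finset.Icc 1 j, u i < k)
    (hu_inj : ∀ i ∈ Finset.Icc 1 j, ∀ i' ∈ Finset.Icc 1 j, u i = u i' → i = i')
    (hu_attained : ∀ i ∈ Finset.Icc 1 j, (resClass k A (u i)).Nonempty)
    (hu_cover : ∀ a ∈ A, ∃ i ∈ Finset.Icc 1 j, a % (k : ℤ) = (u i : ℤ))
    (hu1 : u 1 = 0)
    (hmono : ∀ i ∈ Finset.Icc 1 j, ∀ i' ∈ Finset.Icc 1 j, i ≤ i' →
      (resClass k A (u i')).card ≤ (resClass k A (u i)).card)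
    (m : ℕ) (hm_mem : m ∈ Finset.Icc 1 j) (hm_p : ¬ p ∣ u m)
    (hm_min : ∀ i ∈ Finset.Icc 1 j, ¬ p ∣ u i → m ≤ i)
    (hX : k < (Xhat k A (u m)).card + m - 1) :
    ((k : ℤ) + 1) * (resClass k A (u m)).card +
        (m : ℤ) * ((resClass k A (u 1)).card - (resClass k A (u m)).card) - (k : ℤ) ≤
      ((resClass k A (u m) + kdil k A).card : ℤ) := by
  have hp2 : 2 ≤ p := hp.two_le
  have hk0 : 0 < k := by rw [hk]; positivity
  haveI : NeZero k := ⟨hk0.ne'⟩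
  obtain ⟨hm1, hmj⟩ := Finset.mem_Icc.1 hm_mem
  have h1j : (1 : ℕ) ∈ Finset.Icc 1 j := Finset.mem_Icc.2 ⟨le_refl 1, hj⟩
  set X := Xhat k A ((u m : ℕ) : ℤ) with hXdef
  set h := X.card with hhdef
  -- h ≤ k
  have hhk : h ≤ k := by
    have := Finset.card_le_univ X
    rwa [ZMod.card] at this
  -- k ≥ 2 (m - 1)
  have hkm : 2 * m ≤ k + 2 := by
    have hpdvd : ∀ i ∈ Finset.Icc 1 (m - 1), p ∣ u i := by
      intro i hi
      obtain ⟨hi1, hi2⟩ := Finset.mem_Icc.1 hi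
      have hij : i ∈ Finset.Icc 1 j := Finset.mem_Icc.2 ⟨hi1, by omega⟩
      by_contra hnd
      have := hm_min i hij hnd
      omega
    have hcard : m - 1 ≤ p ^ (α - 1) := by
      have hinj : Set.InjOn (fun i => u i / p) (Finset.Icc 1 (m - 1)) := by
        intro i hi i' hi' hEq
        simp only [Finset.coe_Icc, Set.mem_Icc] at hi hi'
        have hij : i ∈ Finset.Icc 1 j := Finset.mem_Icc.2 ⟨hi.1, by omega⟩
        have hij' : i' ∈ Finset.Icc 1 j := Finset.mem_Icc.2 ⟨hi'.1, by omega⟩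
        have d1 := Nat.div_mul_cancel (hpdvd i (Finset.mem_Icc.2 ⟨hi.1, hi.2⟩))
        have d2 := Nat.div_mul_cancel (hpdvd i' (Finset.mem_Icc.2 ⟨hi'.1, hi'.2⟩))
        have : u i = u i' := by
          rw [← d1, ← d2]; simp only at hEq; rw [hEq]
        exact hu_inj i hij i' hij' this
      have hmaps : ∀ i ∈ Finset.Icc 1 (m - 1), u i / p ∈ Finset.range (p ^ (α - 1)) := by
        intro i hi
        obtain ⟨hi1, hi2⟩ := Finset.mem_Icc.1 hi
        have hij : i ∈ Finset.Icc 1 j := Finset.mem_Icc.2 ⟨hi1, by omega⟩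
        have hlt := hu_lt i hij
        rw [Finset.mem_range, Nat.div_lt_iff_lt_mul (by omega : 0 < p)]
        calc u i < k := hlt
          _ = p ^ (α - 1) * p := by rw [hk, ← pow_succ]; congr 1; omega
      calc m - 1 = (Finset.Icc 1 (m - 1)).card := by rw [Nat.card_Icc]; omega
        _ = ((Finset.Icc 1 (m - 1)).image (fun i => u i / p)).card :=
            (Finset.card_image_of_injOn hinj).symm
        _ ≤ (Finset.range (p ^ (α - 1))).card := by
            apply Finset.card_le_card
            intro v hv
            obtain ⟨i, hi, rfl⟩ := Finset.mem_image.1 hv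
            exact hmaps i hi
        _ = p ^ (α - 1) := Finset.card_range _
    have h2pow : 2 * p ^ (α - 1) ≤ k := by
      rw [hk]
      calc 2 * p ^ (α - 1) ≤ p * p ^ (α - 1) := by
            exact Nat.mul_le_mul_right _ hp2
        _ = p ^ α := by rw [← pow_succ']; congr 1; omega
    omega
  -- injectivity of residues in ZMod k
  have hval : ∀ i ∈ Finset.Icc 1 j, ((u i : ℕ) : ZMod k).val = u i := by
    intro i hi
    exact ZMod.val_natCast_of_lt (hu_lt i hi)
  -- pigeonhole
  have pigeon : ∀ r : ZMod k, ∃ i ∈ Finset.Icc 1 m, r - ((u i : ℕ) : ZMod k) ∈ X := by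
    intro r
    by_contra hcon
    push_neg at hcon
    have hsubIcc : Finset.Icc 1 m ⊆ Finset.Icc 1 j := by
      apply Finset.Icc_subset_Icc_right hmj
    have hinj : Set.InjOn (fun i => r - ((u i : ℕ) : ZMod k)) (Finset.Icc 1 m) := by
      intro i hi i' hi' hEq
      simp only [Finset.coe_Icc, Set.mem_Icc] at hi hi'
      have hij : i ∈ Finset.Icc 1 j := Finset.mem_Icc.2 ⟨hi.1, le_trans hi.2 hmj⟩
      have hij' : i' ∈ Finset.Icc 1 j := Finset.mem_Icc.2 ⟨hi'.1, le_trans hi'.2 hmj⟩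
      have hcast : ((u i : ℕ) : ZMod k) = ((u i' : ℕ) : ZMod k) := by
        simp only at hEq
        have := sub_right_injective hEq
        exact this
      have : u i = u i' := by
        rw [← hval i hij, ← hval i' hij', hcast]
      exact hu_inj i hij i' hij' this
    have hsubc : (Finset.Icc 1 m).image (fun i => r - ((u i : ℕ) : ZMod k)) ⊆ Xᶜ := by
      intro v hv
      obtain ⟨i, hi, rfl⟩ := Finset.mem_image.1 hv
      exact Finset.mem_compl.2 (hcon i hi)
    have hm_le : m ≤ Xᶜ.card := by
      calc m = (Finset.Icc 1 m).card := by rw [Nat.card_Icc]; omega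
        _ = ((Finset.Icc 1 m).image (fun i => r - ((u i : ℕ) : ZMod k))).card :=
            (Finset.card_image_of_injOn hinj).symm
        _ ≤ Xᶜ.card := Finset.card_le_card hsubc
    have hcompl : Xᶜ.card = k - h := by
      rw [Finset.card_compl, ZMod.card]
    omega
  -- per-fiber bounds
  have bound1 : ∀ r ∈ X, (cFib k A ((u m : ℕ) : ℤ) r).card + (resClass k A (u 1)).card
      ≤ (fib k A ((u m : ℕ) : ℤ) r).card + 1 := by
    intro r hr
    have hz : ((u 1 : ℕ) : ZMod k) = 0 := by rw [hu1]; simp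
    have hr' : r - ((u 1 : ℕ) : ZMod k) ∈ X := by rw [hz, sub_zero]; exact hr
    have := fiber_bound hk0 A ((u m : ℕ) : ℤ) (u 1) (hu_attained 1 h1j) r hr'
    rw [hz, sub_zero] at this
    exact this
  have bound2 : ∀ r : ZMod k, (resClass k A (u m)).card ≤ (fib k A ((u m : ℕ) : ℤ) r).card := by
    intro r
    obtain ⟨i, him, hri⟩ := pigeon r
    obtain ⟨hi1, hi2⟩ := Finset.mem_Icc.1 him
    have hij : i ∈ Finset.Icc 1 j := Finset.mem_Icc.2 ⟨hi1, le_trans hi2 hmj⟩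
    have hkey := fiber_bound hk0 A ((u m : ℕ) : ℤ) (u i) (hu_attained i hij) r hri
    have hpos := (cFib_nonempty hk0 hri).card_pos
    have hAi : (resClass k A (u m)).card ≤ (resClass k A (u i)).card :=
      hmono i hij m hm_mem hi2
    omega
  -- partition of the sumset
  have hSsum : ((resClass k A (u m) + kdil k A).card : ℤ)
      = ∑ r : ZMod k, ((fib k A ((u m : ℕ) : ℤ) r).card : ℤ) := by
    have := Finset.card_eq_sum_card_fiberwise
      (f := fun s : ℤ => ((s / (k : ℤ) : ℤ) : ZMod k))
      (s := resClass k A (u m) + kdil k A) (t := Finset.univ)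
      (fun x _ => Finset.mem_univ _)
    rw [this]
    push_cast
    rfl
  -- partition of A_m over Xhat
  have hAmsum : ((resClass k A (u m)).card : ℤ)
      = ∑ r ∈ X, ((cFib k A ((u m : ℕ) : ℤ) r).card : ℤ) := by
    have := Finset.card_eq_sum_card_fiberwise
      (f := fun a : ℤ => ((a / (k : ℤ) : ℤ) : ZMod k))
      (s := resClass k A ((u m : ℕ) : ℤ)) (t := X)
      (fun a ha => mem_Xhat_of_mem hk0 ha)
    rw [this]
    push_cast
    rfl
  set am : ℤ := ((resClass k A (u m)).card : ℤ) with ham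
  set a1 : ℤ := ((resClass k A (u 1)).card : ℤ) with ha1
  have hS1 : ∑ r ∈ X, ((fib k A ((u m : ℕ) : ℤ) r).card : ℤ)
      ≥ am + (h : ℤ) * (a1 - 1) := by
    have hstep : ∀ r ∈ X, ((cFib k A ((u m : ℕ) : ℤ) r).card : ℤ) + (a1 - 1)
        ≤ ((fib k A ((u m : ℕ) : ℤ) r).card : ℤ) := by
      intro r hr
      have := bound1 r hr
      rw [ha1]
      push_cast
      omega
    calc ∑ r ∈ X, ((fib k A ((u m : ℕ) : ℤ) r).card : ℤ)
        ≥ ∑ r ∈ X, (((cFib k A ((u m : ℕ) : ℤ) r).card : ℤ) + (a1 - 1)) :=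
          Finset.sum_le_sum hstep
      _ = am + (h : ℤ) * (a1 - 1) := by
          rw [Finset.sum_add_distrib, Finset.sum_const, ← hAmsum, nsmul_eq_mul]
  have hS2 : ∑ r ∈ Xᶜ, ((fib k A ((u m : ℕ) : ℤ) r).card : ℤ)
      ≥ ((k : ℤ) - (h : ℤ)) * am := by
    calc ∑ r ∈ Xᶜ, ((fib k A ((u m : ℕ) : ℤ) r).card : ℤ)
        ≥ ∑ _r ∈ Xᶜ, am := Finset.sum_le_sum (fun r _ => by
            have := bound2 r; rw [ham]; exact_mod_cast this)
      _ = (Xᶜ.card : ℤ) * am := by rw [Finset.sum_const, nsmul_eq_mul]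
      _ = ((k : ℤ) - (h : ℤ)) * am := by
          rw [Finset.card_compl, ZMod.card]
          congr 1
          omega
  have htotal : ((resClass k A (u m) + kdil k A).card : ℤ)
      ≥ am + (h : ℤ) * (a1 - 1) + ((k : ℤ) - (h : ℤ)) * am := by
    rw [hSsum, ← Finset.sum_add_sum_compl X]
    exact add_le_add hS1 hS2
  -- arithmetic
  have hX' : (k : ℤ) + 2 ≤ (h : ℤ) + (m : ℤ) := by exact_mod_cast (by omega : k + 2 ≤ h + m)
  have hkm' : 2 * (m : ℤ) ≤ (k : ℤ) + 2 := by exact_mod_cast hkm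
  have hhk' : (h : ℤ) ≤ (k : ℤ) := by exact_mod_cast hhk
  have ham1 : 1 ≤ am := by
    rw [ham]
    exact_mod_cast (hu_attained m hm_mem).card_pos
  have hama1 : am ≤ a1 := by
    rw [ham, ha1]
    exact_mod_cast hmono 1 h1j m hm_mem hm1
  have hmh : (m : ℤ) ≤ (h : ℤ) := by linarith
  have hprod : ((h : ℤ) - m) * (a1 - am) ≥ 0 :=
    mul_nonneg (by linarith) (by linarith)
  linarith
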